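/- Let ψ : ℝ → ℂ be a Schwartz function, let t ∈ ℝ, q = e^{2πit}, and let r ≥ 0 be an integer. Then Σ_{l∈ℤ} l^r q^l ψ̂(l) = (2πi)^{−r} Σ_{l∈ℤ} ψ^{(r)}(l + t), where ψ̂(ξ) = ∫_ℝ e^{−2πixξ} ψ(x) dx is the Fourier transform and ψ^{(r)} is the r-th derivative; both series converge absolutely. (This is the identity FT Δ_{q,r} = Δ^{q,r} of tempered distributions, tested against ψ; the case r = 0, t = 0 is the Poisson summation formula.) -/

import Mathlib

open Complex Filter Set Finset MeasureTheory FourierTransform SchwartzMap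
open scoped Real

noncomputable section

-- summability of a Schwartz function over the integers
lemma schwartz_summable_int (f : SchwartzMap ℝ ℂ) :
    Summable fun l : ℤ => ‖f (l : ℝ)‖ := by
  apply summable_of_isBigO (Real.summable_abs_int_rpow one_lt_two)
  exact ((f.isBigO_cocompact_rpow (-2)).comp_tendsto Int.tendsto_coe_cofinite).norm_left

-- translation has temperate growth
lemma hasTemperateGrowth_add_const (t : ℝ) :
    Function.HasTemperateGrowth (fun x : ℝ => x + t) := by
  apply Function.HasTemperateGrowth.of_fderiv (k := 1) (C := 1 + |t|)
  · have : (fderiv ℝ fun x : ℝ => x + t) = fun _ => ContinuousLinearMap.id ℝ ℝ := by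
      funext x
      rw [fderiv_add_const]
      exact fderiv_id
    rw [this]
    exact .const _
  · exact (differentiable_id.add_const t)
  · intro x
    have : ‖x + t‖ ≤ ‖x‖ + |t| := norm_add_le x t
    have h1 : (0:ℝ) ≤ ‖x‖ := norm_nonneg x
    have h2 : (0:ℝ) ≤ |t| := abs_nonneg t
    calc ‖x + t‖ ≤ ‖x‖ + |t| := this
      _ ≤ (1 + |t|) * (1 + ‖x‖) ^ 1 := by nlinarith

-- iterated derivCLM agrees with iteratedDeriv
lemma derivCLM_iterate_apply (r : ℕ) (ψ : SchwartzMap ℝ ℂ) (x : ℝ) :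
    ((SchwartzMap.derivCLM ℝ ℂ)^[r] ψ) x = iteratedDeriv r (fun y : ℝ => ψ y) x := by
  induction r generalizing ψ with
  | zero => simp
  | succ n ih =>
    rw [Function.iterate_succ_apply, ih, iteratedDeriv_succ']
    congr 1

/-- For a Schwartz function `ψ : ℝ → ℂ`, `t ∈ ℝ`, `q = e^{2πit}`, and an
integer `r ≥ 0`, both series below converge absolutely and
`Σ_{l∈ℤ} l^r q^l ψ̂(l) = (2πi)^{-r} Σ_{l∈ℤ} ψ^{(r)}(l + t)`, where
`ψ̂(ξ) = ∫ e^{-2πixξ} ψ(x) dx`. (This is `FT Δ_{q,r} = Δ^{q,r}` tested against `ψ`; the case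
`r = 0`, `t = 0` is the Poisson summation formula.) -/
theorem replication_fourier_identity (ψ : SchwartzMap ℝ ℂ) (t : ℝ) (q : ℂ)
    (hq : q = Complex.exp (2 * (π : ℂ) * Complex.I * (t : ℂ))) (r : ℕ) :
    Summable (fun l : ℤ => ‖((l : ℂ) ^ r * q ^ l *
      ∫ x : ℝ, Complex.exp (-(2 * (π : ℂ) * Complex.I) * (x : ℂ) * (l : ℂ)) * ψ x)‖) ∧
    Summable (fun l : ℤ => ‖iteratedDeriv r (fun x : ℝ => ψ x) ((l : ℝ) + t)‖) ∧
    (∑' l : ℤ, (l : ℂ) ^ r * q ^ l *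
        ∫ x : ℝ, Complex.exp (-(2 * (π : ℂ) * Complex.I) * (x : ℂ) * (l : ℂ)) * ψ x) =
      ((2 * (π : ℂ) * Complex.I) ^ r)⁻¹ *
        ∑' l : ℤ, iteratedDeriv r (fun x : ℝ => ψ x) ((l : ℝ) + t) := by
  -- the r-th derivative as a Schwartz map
  set g : SchwartzMap ℝ ℂ := (SchwartzMap.derivCLM ℝ ℂ)^[r] ψ with hg_def
  have hg : ∀ x : ℝ, g x = iteratedDeriv r (fun y : ℝ => ψ y) x :=
    derivCLM_iterate_apply r ψ
  have hgfun : (fun y : ℝ => g y) = iteratedDeriv r (fun y : ℝ => ψ y) := funext hg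
  -- the integral is the Fourier transform
  have hFT : ∀ l : ℤ, (∫ x : ℝ, Complex.exp (-(2 * (π : ℂ) * Complex.I) * (x : ℂ) * (l : ℂ)) * ψ x)
      = 𝓕 (fun y : ℝ => ψ y) l := by
    intro l
    rw [Real.fourier_real_eq_integral_exp_smul]
    congr 1
    ext x
    rw [smul_eq_mul]
    congr 1
    push_cast
    ring
  -- Fourier transform of the iterated derivative
  have hcd := ψ.smooth ⊤
  have hInt : ∀ n : ℕ, (n : ℕ∞) ≤ (⊤ : ℕ∞) → Integrable (iteratedDeriv n (fun y : ℝ => ψ y)) := by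
    intro n _
    have := ((SchwartzMap.derivCLM ℝ ℂ)^[n] ψ).integrable (μ := volume)
    rwa [show ⇑((SchwartzMap.derivCLM ℝ ℂ)^[n] ψ) = iteratedDeriv n (fun y : ℝ => ψ y) from
      funext (derivCLM_iterate_apply n ψ)] at this
  have hFd : 𝓕 (fun y : ℝ => g y) = fun x : ℝ => (2 * (π:ℂ) * Complex.I * x) ^ r •
      𝓕 (fun y : ℝ => ψ y) x := by
    rw [hgfun]
    exact Real.fourier_iteratedDeriv (N := ⊤) hcd hInt le_top
  -- |q| = 1
  have hqnorm : ‖q‖ = 1 := by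
    rw [hq, Complex.norm_exp]
    simp [mul_comm, mul_assoc]
  have hqlnorm : ∀ l : ℤ, ‖q ^ l‖ = 1 := fun l => by
    rw [norm_zpow, hqnorm, one_zpow]
  -- Summability 1
  have hFg := schwartz_summable_int (SchwartzMap.fourierTransformCLM ℝ g)
  have hFg' : Summable fun l : ℤ => ‖𝓕 (fun y : ℝ => g y) (l : ℝ)‖ := hFg
  have hsum1 : Summable (fun l : ℤ => ‖((l : ℂ) ^ r * q ^ l *
      ∫ x : ℝ, Complex.exp (-(2 * (π : ℂ) * Complex.I) * (x : ℂ) * (l : ℂ)) * ψ x)‖) := by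
    have h2 : Summable fun l : ℤ => ((2*π)^r)⁻¹ * ‖𝓕 (fun y : ℝ => g y) (l : ℝ)‖ :=
      hFg'.mul_left _
    refine h2.congr fun l => ?_
    rw [hFT l, hFd]
    simp only [smul_eq_mul, norm_mul, norm_pow, hqlnorm l, mul_one]
    have h2 : ‖(2:ℂ)‖ = 2 := by norm_num
    have hπ : ‖((π:ℝ):ℂ)‖ = π := by
      rw [Complex.norm_real, Real.norm_eq_abs, _root_.abs_of_nonneg Real.pi_nonneg]
    rw [h2, hπ, Complex.norm_I, Complex.ofReal_intCast, mul_one]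
    have h2π : (0:ℝ) < (2*π)^r := by positivity
    rw [mul_pow]
    field_simp
    ring
  refine ⟨hsum1, ?_, ?_⟩
  -- Summability 2 : via the translated Schwartz map
  · have htg := hasTemperateGrowth_add_const t
    have hanti : AntilipschitzWith 1 (fun x : ℝ => x + t) := by
      apply AntilipschitzWith.of_le_mul_dist
      intro x y
      simp [dist_eq, add_sub_add_right_eq_sub]
    have h := schwartz_summable_int (SchwartzMap.compCLMOfAntilipschitz ℝ htg hanti g)
    refine h.congr fun l => ?_
    rw [SchwartzMap.compCLMOfAntilipschitz_apply]
    simp only [Function.comp_apply]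
    rw [hg]
  -- the identity
  · have hPoisson := SchwartzMap.tsum_eq_tsum_fourier g t
    have hfour : ∀ l : ℤ, (fourier l (t : UnitAddCircle) : ℂ) = q ^ l := by
      intro l
      rw [fourier_coe_apply, hq, ← Complex.exp_int_mul]
      congr 1
      push_cast
      ring
    have hLHS : ∑' l : ℤ, iteratedDeriv r (fun x : ℝ => ψ x) ((l : ℝ) + t)
        = ∑' l : ℤ, (2 * (π:ℂ) * Complex.I) ^ r * ((l : ℂ) ^ r * q ^ l *
          ∫ x : ℝ, Complex.exp (-(2 * (π : ℂ) * Complex.I) * (x : ℂ) * (l : ℂ)) * ψ x) :=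
      calc ∑' l : ℤ, iteratedDeriv r (fun x : ℝ => ψ x) ((l : ℝ) + t)
          = ∑' l : ℤ, g (t + (l:ℝ)) :=
            tsum_congr fun l => by rw [add_comm t (l:ℝ), hg]
        _ = ∑' l : ℤ, (SchwartzMap.fourierTransformCLM ℝ g) (l:ℝ) *
              fourier l (t : UnitAddCircle) := hPoisson
        _ = ∑' l : ℤ, (2 * (π:ℂ) * Complex.I) ^ r * ((l : ℂ) ^ r * q ^ l *
              ∫ x : ℝ, Complex.exp (-(2 * (π : ℂ) * Complex.I) * (x : ℂ) * (l : ℂ)) * ψ x) := by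
            refine tsum_congr fun l => ?_
            rw [SchwartzMap.fourierTransformCLM_apply, SchwartzMap.fourier_coe, hFd, hfour l]
            simp only [smul_eq_mul]
            rw [← hFT l]
            push_cast
            ring
    rw [hLHS, tsum_mul_left, ← mul_assoc, inv_mul_cancel₀, one_mul]
    exact pow_ne_zero _ (mul_ne_zero (mul_ne_zero two_ne_zero
      (by exact_mod_cast Real.pi_ne_zero)) Complex.I_ne_zero)
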